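/- For the linear pseudo-observation Kalman update with augmented observation operator Ĥ = [H; D] and augmented data ŷ = [y; d], as the pseudo-observation error covariance R^g → 0 (with R fixed and SPD), the analysis mean converges to a point satisfying the constraint D x = d exactly, provided D has full row rank and the prior covariance is SPD. -/

import Mathlib

open Matrix Filter

/-- Pseudo-observation Kalman update in the vanishing-covariance limit: with a
SPD prior covariance `P`, physical observations `(H, y, R)` (`R` SPD), and a
full-row-rank constraint `D x = d` appended as a pseudo-observation with error
covariance `ε I`, the Kalman analysis mean
`μ_a(ε) = μ + P Ĥᵀ (Ĥ P Ĥᵀ + blkdiag(R, εI))⁻¹ (ŷ − Ĥ μ)`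
(where `Ĥ = [H; D]`, `ŷ = [y; d]`) satisfies the constraint exactly in the
limit: `D μ_a(ε) → d` as `ε → 0⁺`. -/
theorem pseudo_observation_limit_satisfies_constraint
    {n m c : ℕ}
    (P : Matrix (Fin n) (Fin n) ℝ) (hP : P.PosDef)
    (H : Matrix (Fin m) (Fin n) ℝ) (R : Matrix (Fin m) (Fin m) ℝ)
    (hR : R.PosDef) (y : Fin m → ℝ)
    (D : Matrix (Fin c) (Fin n) ℝ) (hD : D.rank = c) (d : Fin c → ℝ)
    (μ : Fin n → ℝ)
    (Hhat : Matrix (Fin m ⊕ Fin c) (Fin n) ℝ) (hHhat : Hhat = fromRows H D)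
    (yhat : Fin m ⊕ Fin c → ℝ) (hyhat : yhat = Sum.elim y d)
    (μa : ℝ → Fin n → ℝ)
    (hμa : ∀ ε, μa ε = μ +
      (P * Hhatᵀ *
        (Hhat * P * Hhatᵀ +
          fromBlocks R 0 0 (ε • (1 : Matrix (Fin c) (Fin c) ℝ)))⁻¹) *ᵥ
        (yhat - Hhat *ᵥ μ)) :
    Tendsto (fun ε => D *ᵥ μa ε) (nhdsWithin 0 (Set.Ioi 0)) (nhds d) := by
  classical
  -- injectivity of `Dᵀ *ᵥ ·` from full row rank
  have hDTrank : (Dᵀ).rank = c := by rw [Matrix.rank_transpose]; exact hD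
  have hDTinj : Function.Injective (Dᵀ).mulVecLin := by
    rw [← LinearMap.ker_eq_bot]
    have hrn := (Dᵀ).mulVecLin.finrank_range_add_finrank_ker
    rw [show Module.finrank ℝ (Fin c → ℝ) = c by simp, ← Matrix.rank] at hrn
    rw [hDTrank] at hrn
    have hker0 : Module.finrank ℝ (LinearMap.ker (Dᵀ).mulVecLin) = 0 := by omega
    exact Submodule.finrank_eq_zero.mp hker0
  -- the limiting innovation covariance
  set S0 : Matrix (Fin m ⊕ Fin c) (Fin m ⊕ Fin c) ℝ :=
    Hhat * P * Hhatᵀ + fromBlocks R 0 0 0 with hS0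
  -- S0 is positive definite
  have hS0pd : S0.PosDef := by
    rw [Matrix.posDef_iff_dotProduct_mulVec]
    constructor
    · have h1 : (Hhat * P * Hhatᵀ).IsHermitian := by
        have := hP.posSemidef.mul_mul_conjTranspose_same Hhat
        simpa using this.isHermitian
      have h2 : (fromBlocks R 0 0 (0 : Matrix (Fin c) (Fin c) ℝ)).IsHermitian := by
        unfold Matrix.IsHermitian
        ext (i | i) (j | j)
        · simpa using congrFun (congrFun hR.isHermitian i) j
        · simp
        · simp
        · simp
      exact h1.add h2
    · intro x hx
      have hquad : star x ⬝ᵥ (S0 *ᵥ x) =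
          (Hhatᵀ *ᵥ x) ⬝ᵥ (P *ᵥ (Hhatᵀ *ᵥ x)) + (x ∘ Sum.inl) ⬝ᵥ (R *ᵥ (x ∘ Sum.inl)) := by
        have hxsplit : x = Sum.elim (x ∘ Sum.inl) (x ∘ Sum.inr) := by
          ext (i | i) <;> rfl
        rw [hS0, Matrix.add_mulVec, dotProduct_add]
        congr 1
        · rw [Matrix.mul_assoc, ← Matrix.mulVec_mulVec, star_trivial,
            Matrix.dotProduct_mulVec, ← Matrix.mulVec_transpose,
            ← Matrix.mulVec_mulVec]
        · rw [star_trivial]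
          conv_lhs => rw [hxsplit]
          rw [Matrix.fromBlocks_mulVec]
          simp [dotProduct, Fintype.sum_sum_type]
      rw [hquad]
      rcases eq_or_ne (x ∘ Sum.inl) 0 with h1 | h1
      · have h2 : x ∘ Sum.inr ≠ 0 := by
          intro h2
          apply hx
          ext (i | i)
          · exact congrFun h1 i
          · exact congrFun h2 i
        have hHx : Hhatᵀ *ᵥ x = Dᵀ *ᵥ (x ∘ Sum.inr) := by
          have hxsplit : x = Sum.elim (x ∘ Sum.inl) (x ∘ Sum.inr) := by
            ext (i | i) <;> rfl
          rw [hHhat]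
          conv_lhs => rw [hxsplit]
          rw [Matrix.transpose_fromRows, Matrix.fromCols_mulVec_sumElim, h1]
          simp
        have hHxne : Hhatᵀ *ᵥ x ≠ 0 := by
          rw [hHx]
          intro h
          apply h2
          apply hDTinj
          rw [map_zero, Matrix.mulVecLin_apply]
          exact h
        have hterm1 : 0 < (Hhatᵀ *ᵥ x) ⬝ᵥ (P *ᵥ (Hhatᵀ *ᵥ x)) := by
          have := hP.dotProduct_mulVec_pos hHxne
          simpa using this
        have hterm2 : 0 ≤ (x ∘ Sum.inl) ⬝ᵥ (R *ᵥ (x ∘ Sum.inl)) := by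
          rw [h1]; simp
        linarith
      · have hterm1 : 0 ≤ (Hhatᵀ *ᵥ x) ⬝ᵥ (P *ᵥ (Hhatᵀ *ᵥ x)) := by
          have := hP.posSemidef.dotProduct_mulVec_nonneg (Hhatᵀ *ᵥ x)
          simpa using this
        have hterm2 : 0 < (x ∘ Sum.inl) ⬝ᵥ (R *ᵥ (x ∘ Sum.inl)) := by
          have := hR.dotProduct_mulVec_pos h1
          simpa using this
        linarith
  have hS0unit : IsUnit S0.det := (Matrix.isUnit_iff_isUnit_det _).mp hS0pd.isUnit
  -- the ε-dependent covariance
  set S : ℝ → Matrix (Fin m ⊕ Fin c) (Fin m ⊕ Fin c) ℝ :=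
    fun ε => Hhat * P * Hhatᵀ + fromBlocks R 0 0 (ε • (1 : Matrix (Fin c) (Fin c) ℝ))
    with hSdef
  have hS0eq : S 0 = S0 := by
    rw [hSdef, hS0]; simp
  -- continuity of S
  have hScont : Continuous S := by
    apply continuous_const.add
    exact Continuous.matrix_fromBlocks continuous_const continuous_const continuous_const
      (continuous_id.smul continuous_const)
  -- continuity of the inverse at 0
  have hinvcont : ContinuousAt (fun ε => (S ε)⁻¹) 0 := by
    have h1 : ContinuousAt Inv.inv (S 0) := by
      apply continuousAt_matrix_inv
      rw [hS0eq]
      rw [Ring.inverse_eq_inv']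
      exact continuousAt_inv₀ hS0unit.ne_zero
    exact h1.comp hScont.continuousAt
  set r : Fin m ⊕ Fin c → ℝ := yhat - Hhat *ᵥ μ with hr
  -- the limit point
  set μ0 : Fin n → ℝ := μ + (P * Hhatᵀ * S0⁻¹) *ᵥ r with hμ0
  -- convergence of μa to μ0 (along 𝓝[>] 0)
  have htend : Tendsto (fun ε => D *ᵥ μa ε) (nhdsWithin 0 (Set.Ioi 0)) (nhds (D *ᵥ μ0)) := by
    have h1 : Tendsto (fun ε => (S ε)⁻¹) (nhdsWithin 0 (Set.Ioi 0)) (nhds S0⁻¹) := by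
      have := hinvcont.tendsto
      rw [hS0eq] at this
      exact this.mono_left nhdsWithin_le_nhds
    have h2 : Continuous fun M : Matrix (Fin m ⊕ Fin c) (Fin m ⊕ Fin c) ℝ =>
        D *ᵥ (μ + (P * Hhatᵀ * M) *ᵥ r) := by
      apply Continuous.matrix_mulVec continuous_const
      exact continuous_const.add
        ((continuous_const.matrix_mul continuous_id).matrix_mulVec continuous_const)
    have h3 := (h2.tendsto S0⁻¹).comp h1
    have h4 : (fun ε => D *ᵥ μa ε) =
        (fun M : Matrix (Fin m ⊕ Fin c) (Fin m ⊕ Fin c) ℝ =>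
          D *ᵥ (μ + (P * Hhatᵀ * M) *ᵥ r)) ∘ (fun ε => (S ε)⁻¹) := by
      funext ε
      simp only [Function.comp_apply, hμa ε, hr, hSdef]
    rw [h4]
    exact h3
  -- the limit point satisfies the constraint: D *ᵥ μ0 = d
  have hconstraint : D *ᵥ μ0 = d := by
    set z : Fin m ⊕ Fin c → ℝ := S0⁻¹ *ᵥ r with hz
    have hSz : S0 *ᵥ z = r := by
      rw [hz, Matrix.mulVec_mulVec, Matrix.mul_nonsing_inv _ hS0unit, Matrix.one_mulVec]
    have hHμ0 : Hhat *ᵥ μ0 = yhat - fromBlocks R 0 0 0 *ᵥ z := by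
      rw [hμ0, Matrix.mulVec_add]
      have : Hhat *ᵥ ((P * Hhatᵀ * S0⁻¹) *ᵥ r) = (Hhat * P * Hhatᵀ) *ᵥ z := by
        rw [Matrix.mulVec_mulVec, hz, Matrix.mulVec_mulVec]
        simp [Matrix.mul_assoc]
      rw [this, show Hhat * P * Hhatᵀ = S0 - fromBlocks R 0 0 0 by rw [hS0]; abel,
        Matrix.sub_mulVec, hSz, hr]
      abel
    have hbot : ∀ i, (fromBlocks R 0 0 (0 : Matrix (Fin c) (Fin c) ℝ) *ᵥ z) (Sum.inr i) = 0 := by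
      intro i
      simp [Matrix.mulVec, dotProduct, Fintype.sum_sum_type]
    funext i
    have h1 : (Hhat *ᵥ μ0) (Sum.inr i) = (D *ᵥ μ0) i := by
      rw [hHhat, Matrix.fromRows_mulVec]; rfl
    have h2 : yhat (Sum.inr i) = d i := by rw [hyhat]; rfl
    calc (D *ᵥ μ0) i = (Hhat *ᵥ μ0) (Sum.inr i) := h1.symm
      _ = yhat (Sum.inr i) - (fromBlocks R 0 0 0 *ᵥ z) (Sum.inr i) := by rw [hHμ0]; rfl
      _ = d i := by rw [h2, hbot]; ring
  rw [hconstraint] at htend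
  exact htend
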